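/- Let b, k and w be positive integers such that b ≥ 6 and k ≤ w/2. If ε = k/w, then the block P_{b,w} is (ε, k, ν_b)-normal. -/

import Mathlib

/-- The one-digit weighting `ν_b^{(1)}`: `1/2^b` for `j < b`, `(2^b - b)/2^b` for `j = b`,
and `0` for `j > b`. -/
noncomputable def nu1 (b j : ℕ) : ℝ :=
  if j < b then 1 / 2 ^ b else if j = b then (2 ^ b - b) / 2 ^ b else 0

/-- The weighting `ν_b` of a block `B = (b_1, …, b_k)`: `∏_j ν_b^{(1)}(b_j)`. -/
noncomputable def nu (b : ℕ) (B : List ℕ) : ℝ := (B.map (nu1 b)).prod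

/-- The `i`-th (0-indexed) block of length `w` in base `b`, in lexicographic order. -/
def lexBlock (b w i : ℕ) : List ℕ :=
  (List.range w).map (fun j => i / b ^ (w - 1 - j) % b)

/-- The block `P_{b,w}`: running over the blocks `P` of length `w` in base `b+1` in
lexicographic order, concatenate `2^{bw}·ν_b(P) = (2^b - b)^{g_b(P)}` copies of each `P`. -/
def Pblock (b w : ℕ) : List ℕ :=
  ((List.range ((b + 1) ^ w)).map fun i =>
    (List.replicate ((2 ^ b - b) ^ ((lexBlock (b + 1) w i).count b))
      (lexBlock (b + 1) w i)).flatten).flatten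

/-- `numOcc B y` is the number of occurrences of the block `B` as a contiguous
subblock of the block `y`. -/
def numOcc (B y : List ℕ) : ℕ :=
  ((List.range (y.length + 1)).filter (fun i => B.isPrefixOf (y.drop i))).length

/-- A block `y` is `(ε, k, μ)`-normal if every block `B` of length `m` with `1 ≤ m ≤ k`
satisfies `μ(B)·|y|·(1-ε) ≤ N(B,y) ≤ μ(B)·|y|·(1+ε)`. -/
def EKNormal (ε : ℝ) (k : ℕ) (μ : List ℕ → ℝ) (y : List ℕ) : Prop :=
  ∀ B : List ℕ, 1 ≤ B.length → B.length ≤ k →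
    μ B * y.length * (1 - ε) ≤ (numOcc B y : ℝ) ∧
      (numOcc B y : ℝ) ≤ μ B * y.length * (1 + ε)

namespace Stmt5Aux

/-- indicator of occurrence of `B` at position `i` in `y`. -/
def occ (B y : List ℕ) (i : ℕ) : ℕ := if B <+: y.drop i then 1 else 0

lemma occ_le_one (B y : List ℕ) (i : ℕ) : occ B y i ≤ 1 := by
  unfold occ; split <;> omega

lemma length_filter_range (n : ℕ) (p : ℕ → Bool) :
    ((List.range n).filter p).length = ∑ i ∈ Finset.range n, (if p i then 1 else 0) := by
  induction n with
  | zero => simp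
  | succ n ih =>
    rw [List.range_succ, List.filter_append, List.length_append, Finset.sum_range_succ, ih]
    simp only [List.filter]
    split <;> simp_all

lemma numOcc_eq_sum (B y : List ℕ) :
    numOcc B y = ∑ i ∈ Finset.range (y.length + 1), occ B y i := by
  rw [numOcc, length_filter_range]
  refine Finset.sum_congr rfl fun i _ => ?_
  simp only [occ, List.isPrefixOf_iff_prefix]

lemma occ_eq_zero_of_lt {B y : List ℕ} {i : ℕ} (hB : 1 ≤ B.length)
    (h : y.length < i + B.length) :
    occ B y i = 0 := by
  rw [occ, if_neg]
  intro hp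
  have h2 := hp.length_le
  simp only [List.length_drop] at h2
  omega

lemma numOcc_nil {B : List ℕ} (hB : 1 ≤ B.length) : numOcc B [] = 0 := by
  rw [numOcc_eq_sum]
  simp only [List.length_nil, Finset.sum_range_succ]
  rw [occ_eq_zero_of_lt hB (by simp; omega)]
  simp

/-- helper: prefix of an append, short enough, is a prefix of the left part. -/
lemma prefix_of_prefix_append {u Q R : List ℕ} (h : u <+: Q ++ R) (hl : u.length ≤ Q.length) :
    u <+: Q := by
  rw [List.prefix_iff_eq_take] at h ⊢
  rwa [List.take_append_of_le_length hl] at h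

lemma suffix_iff_prefix_drop {u v : List ℕ} (h : u.length ≤ v.length) :
    u <:+ v ↔ u <+: v.drop (v.length - u.length) := by
  rw [List.suffix_iff_eq_drop, List.prefix_iff_eq_take]
  rw [List.take_of_length_le (by simp [List.length_drop]; omega)]

/-- crossing indicator for split at `t` -/
def crossInd (B y z : List ℕ) (t : ℕ) : ℕ :=
  if (0 < t ∧ t < B.length ∧ B.take t <:+ y ∧ B.drop t <+: z) then 1 else 0

def cross2 (B y z : List ℕ) : ℕ := ∑ t ∈ Finset.range (B.length - 1), crossInd B y z (t + 1)

lemma crossInd_le_one (B y z : List ℕ) (t : ℕ) : crossInd B y z t ≤ 1 := by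
  unfold crossInd; split <;> omega

lemma cross2_le (B y z : List ℕ) : cross2 B y z ≤ B.length - 1 := by
  calc cross2 B y z ≤ ∑ _t ∈ Finset.range (B.length - 1), 1 :=
        Finset.sum_le_sum fun t _ => crossInd_le_one _ _ _ _
    _ = B.length - 1 := by simp

lemma crossInd_append_le (B y Q R : List ℕ) (h : B.length ≤ Q.length + 1) (t : ℕ) :
    crossInd B y (Q ++ R) t ≤ crossInd B y Q t := by
  unfold crossInd
  split
  · rename_i hc
    obtain ⟨h1, h2, h3, h4⟩ := hc
    rw [if_pos ⟨h1, h2, h3, prefix_of_prefix_append h4 (by simp; omega)⟩]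
  · omega

lemma cross2_append_le (B y Q R : List ℕ) (h : B.length ≤ Q.length + 1) :
    cross2 B y (Q ++ R) ≤ cross2 B y Q :=
  Finset.sum_le_sum fun t _ => crossInd_append_le B y Q R h _

lemma cross2_nil (B y : List ℕ) : cross2 B y [] = 0 := by
  unfold cross2
  refine Finset.sum_eq_zero fun t ht => ?_
  unfold crossInd
  rw [if_neg]
  rintro ⟨h1, h2, h3, h4⟩
  rw [List.prefix_nil] at h4
  have := congrArg List.length h4
  simp at this
  omega

lemma occ_append_left {B y : List ℕ} (z : List ℕ) {i : ℕ} (hi : i ≤ y.length) :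
    occ B y i ≤ occ B (y ++ z) i := by
  unfold occ
  split
  · rename_i hp
    rw [if_pos]
    rw [List.drop_append_of_le_length hi]
    exact hp.trans (List.prefix_append _ _)
  · omega

lemma occ_append_right (B y z : List ℕ) (i : ℕ) :
    occ B (y ++ z) (y.length + i) = occ B z i := by
  unfold occ
  congr 1
  rw [List.drop_append]
  simp [List.drop_eq_nil_of_le (Nat.le_add_right y.length i)]

lemma numOcc_append (B y z : List ℕ) :
    numOcc B (y ++ z) = (∑ i ∈ Finset.range y.length, occ B (y ++ z) i) + numOcc B z := by
  rw [numOcc_eq_sum, numOcc_eq_sum, List.length_append]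
  have h : y.length + z.length + 1 = y.length + (z.length + 1) := by omega
  rw [h, Finset.sum_range_add]
  congr 1
  exact Finset.sum_congr rfl fun i _ => occ_append_right B y z i

lemma numOcc_append_ge {B : List ℕ} (hB : 1 ≤ B.length) (y z : List ℕ) :
    numOcc B y + numOcc B z ≤ numOcc B (y ++ z) := by
  rw [numOcc_append, numOcc_eq_sum]
  have h1 : ∑ i ∈ Finset.range (y.length + 1), occ B y i
      = ∑ i ∈ Finset.range y.length, occ B y i := by
    rw [Finset.sum_range_succ, occ_eq_zero_of_lt hB (by omega)]
    simp
  rw [h1]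
  have h2 : ∑ i ∈ Finset.range y.length, occ B y i
      ≤ ∑ i ∈ Finset.range y.length, occ B (y ++ z) i :=
    Finset.sum_le_sum fun i hi => occ_append_left z (le_of_lt (Finset.mem_range.mp hi))
  omega

lemma occ_pointwise (B y z : List ℕ) (i : ℕ) (hi : i < y.length) :
    occ B (y ++ z) i ≤ occ B y i + crossInd B y z (y.length - i) := by
  by_cases hp : B <+: (y ++ z).drop i
  · have hd : (y ++ z).drop i = y.drop i ++ z := List.drop_append_of_le_length (le_of_lt hi)
    rw [hd] at hp
    by_cases hm : i + B.length ≤ y.length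
    · have hby : B <+: y.drop i := prefix_of_prefix_append hp (by simp; omega)
      have : occ B y i = 1 := by rw [occ, if_pos hby]
      rw [this]
      have := occ_le_one B (y ++ z) i
      omega
    · -- crossing case
      set t := y.length - i with ht
      have ht1 : 0 < t := by omega
      have ht2 : t < B.length := by omega
      have hlen : (y.drop i).length = t := by simp [List.length_drop]; omega
      have hBeq : B = (y.drop i ++ z).take B.length := List.prefix_iff_eq_take.mp hp
      have htake : B.take t = y.drop i := by
        conv_lhs => rw [hBeq]
        rw [List.take_take, min_eq_left (le_of_lt ht2)]
        rw [List.take_append_of_le_length (by omega), List.take_of_length_le (by omega)]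
      have hdrop : B.drop t = z.take (B.length - t) := by
        conv_lhs => rw [hBeq]
        rw [List.drop_take]
        congr 1
        rw [List.drop_append_of_le_length (by omega), List.drop_of_length_le (by omega),
          List.nil_append]
      have hcross : crossInd B y z t = 1 := by
        rw [crossInd, if_pos]
        refine ⟨ht1, ht2, ?_, ?_⟩
        · rw [htake]; exact List.drop_suffix _ _
        · rw [hdrop]; exact List.take_prefix _ _
      rw [hcross]
      have := occ_le_one B (y ++ z) i
      omega
  · rw [occ, if_neg hp]
    omega

lemma numOcc_append_le {B : List ℕ} (y z : List ℕ) (hB : 1 ≤ B.length)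
    (hm : B.length ≤ y.length) :
    numOcc B (y ++ z) ≤ numOcc B y + cross2 B y z + numOcc B z := by
  rw [numOcc_append]
  have h1 : ∑ i ∈ Finset.range y.length, occ B (y ++ z) i
      ≤ (∑ i ∈ Finset.range y.length, occ B y i)
        + ∑ i ∈ Finset.range y.length, crossInd B y z (y.length - i) := by
    rw [← Finset.sum_add_distrib]
    exact Finset.sum_le_sum fun i hi => occ_pointwise B y z i (Finset.mem_range.mp hi)
  have h2 : ∑ i ∈ Finset.range y.length, occ B y i ≤ numOcc B y := by
    rw [numOcc_eq_sum, Finset.sum_range_succ]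
    omega
  have h3 : ∑ i ∈ Finset.range y.length, crossInd B y z (y.length - i) = cross2 B y z := by
    have hr : ∀ i ∈ Finset.range y.length, crossInd B y z (y.length - i)
        = crossInd B y z (y.length - 1 - i + 1) := by
      intro i hi
      have : y.length - i = y.length - 1 - i + 1 := by
        have := Finset.mem_range.mp hi; omega
      rw [this]
    rw [Finset.sum_congr rfl hr, Finset.sum_range_reflect (fun j => crossInd B y z (j + 1))]
    -- now : ∑ j in range y.length, crossInd B y z (j+1) = cross2
    rw [cross2]
    symm
    apply Finset.sum_subset
    · intro t ht
      rw [Finset.mem_range] at *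
      omega
    · intro t ht hnt
      rw [Finset.mem_range] at *
      rw [crossInd, if_neg]
      rintro ⟨_, h2', _, _⟩
      omega
  omega

/-! ### flatten machinery -/

def adjSum (B : List ℕ) : List (List ℕ) → ℕ
  | [] => 0
  | [_] => 0
  | P :: Q :: L => cross2 B P Q + adjSum B (Q :: L)

lemma adjSum_cons_le (B x : List ℕ) (l : List (List ℕ)) :
    adjSum B (x :: l) ≤ (B.length - 1) + adjSum B l := by
  cases l with
  | nil => simp [adjSum]
  | cons q l' =>
    show cross2 B x q + adjSum B (q :: l') ≤ _
    have := cross2_le B x q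
    omega

lemma adjSum_append_le (B : List ℕ) (xs ys : List (List ℕ)) :
    adjSum B (xs ++ ys) ≤ adjSum B xs + adjSum B ys + (B.length - 1) := by
  induction xs with
  | nil => simp [adjSum]
  | cons x xs ih =>
    cases xs with
    | nil =>
      simp only [List.nil_append, List.singleton_append]
      have := adjSum_cons_le B x ys
      have : adjSum B [x] = 0 := rfl
      calc adjSum B (x :: ys) ≤ (B.length - 1) + adjSum B ys := adjSum_cons_le B x ys
        _ = adjSum B [x] + adjSum B ys + (B.length - 1) := by rw [this]; omega
    | cons x2 xs' =>
      have h1 : adjSum B ((x :: x2 :: xs') ++ ys)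
          = cross2 B x x2 + adjSum B ((x2 :: xs') ++ ys) := rfl
      have h2 : adjSum B (x :: x2 :: xs') = cross2 B x x2 + adjSum B (x2 :: xs') := rfl
      have := ih
      omega

lemma adjSum_replicate_le (B x : List ℕ) (n : ℕ) :
    adjSum B (List.replicate n x) ≤ n * cross2 B x x := by
  induction n with
  | zero => simp [adjSum]
  | succ n ih =>
    cases n with
    | zero => simp [adjSum]
    | succ n' =>
      have h1 : List.replicate (n' + 1 + 1) x = x :: x :: List.replicate n' x := rfl
      have h2 : adjSum B (List.replicate (n' + 1 + 1) x)
          = cross2 B x x + adjSum B (List.replicate (n' + 1) x) := rfl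
      rw [h2]
      have : (n' + 1 + 1) * cross2 B x x = cross2 B x x + (n' + 1) * cross2 B x x := by ring
      omega

lemma numOcc_flatten_ge {B : List ℕ} (hB : 1 ≤ B.length) (L : List (List ℕ)) :
    (L.map (numOcc B)).sum ≤ numOcc B L.flatten := by
  induction L with
  | nil => simp
  | cons P L ih =>
    rw [List.map_cons, List.sum_cons, List.flatten_cons]
    calc numOcc B P + (L.map (numOcc B)).sum ≤ numOcc B P + numOcc B L.flatten := by omega
      _ ≤ numOcc B (P ++ L.flatten) := numOcc_append_ge hB P L.flatten

lemma numOcc_flatten_le {B : List ℕ} {w : ℕ} (hB : 1 ≤ B.length) (hw : B.length ≤ w)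
    (L : List (List ℕ)) (hL : ∀ P ∈ L, P.length = w) :
    numOcc B L.flatten ≤ (L.map (numOcc B)).sum + adjSum B L := by
  induction L with
  | nil => simp [numOcc_nil hB, adjSum]
  | cons P L ih =>
    have hP : P.length = w := hL P (by simp)
    rw [List.flatten_cons, List.map_cons, List.sum_cons]
    have hup := numOcc_append_le P L.flatten hB (by omega)
    cases L with
    | nil =>
      simp only [List.flatten_nil] at hup ⊢
      rw [cross2_nil, numOcc_nil hB] at hup
      have : adjSum B [P] = 0 := rfl
      simp only [List.map_nil, List.sum_nil, this]
      omega
    | cons Q L' =>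
      have hQ : Q.length = w := hL Q (by simp)
      have hcr : cross2 B P (Q :: L').flatten ≤ cross2 B P Q := by
        rw [List.flatten_cons]
        exact cross2_append_le B P Q L'.flatten (by omega)
      have hih := ih (fun R hR => hL R (List.mem_cons_of_mem _ hR))
      have hadj : adjSum B (P :: Q :: L') = cross2 B P Q + adjSum B (Q :: L') := rfl
      omega

/-! ### lexBlock and weighted sums -/

@[simp] lemma lexBlock_length (b w i : ℕ) : (lexBlock b w i).length = w := by
  simp [lexBlock]

lemma lexBlock_zero (b i : ℕ) : lexBlock b 0 i = [] := by simp [lexBlock]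

lemma lexBlock_elem_le (b w i : ℕ) (hb : 0 < b) : ∀ d ∈ lexBlock b w i, d ≤ b - 1 := by
  intro d hd
  simp only [lexBlock, List.mem_map] at hd
  obtain ⟨j, _, rfl⟩ := hd
  have := Nat.mod_lt (i / b ^ (w - 1 - j)) hb
  omega

lemma lexBlock_succ (b w d r : ℕ) (hb : 0 < b) (hd : d < b) (hr : r < b ^ w) :
    lexBlock b (w + 1) (d * b ^ w + r) = d :: lexBlock b w r := by
  unfold lexBlock
  rw [List.range_succ_eq_map, List.map_cons, List.map_map]
  congr 1
  · -- head
    simp only [Nat.sub_zero, Nat.add_sub_cancel]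
    rw [add_comm, Nat.add_mul_div_right _ _ (pow_pos hb w), Nat.div_eq_of_lt hr]
    simp [Nat.mod_eq_of_lt hd]
  · -- tail
    apply List.map_congr_left
    intro j hj
    have hjw : j < w := List.mem_range.mp hj
    simp only [Function.comp_apply]
    have h1 : w + 1 - 1 - Nat.succ j = w - 1 - j := by omega
    rw [h1]
    set e := w - 1 - j with he
    have hew : e + 1 ≤ w := by omega
    have hpow : b ^ (w - e - 1) * b * b ^ e = b ^ w := by
      rw [← pow_succ, ← pow_add]
      congr 1
      omega
    have hrw : d * b ^ w + r = r + d * b ^ (w - e - 1) * b * b ^ e := by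
      rw [mul_assoc, mul_assoc, ← mul_assoc (b ^ (w - e - 1)), hpow]
      ring
    rw [hrw, Nat.add_mul_div_right _ _ (pow_pos hb e),
      Nat.add_mul_mod_self_right]

def wt (b : ℕ) (L : List ℕ) : ℕ := (2 ^ b - b) ^ (L.count b)

lemma wt_cons (b d : ℕ) (L : List ℕ) :
    wt b (d :: L) = (if d = b then 2 ^ b - b else 1) * wt b L := by
  unfold wt
  rw [List.count_cons, pow_add]
  by_cases h : d = b <;> simp [h, mul_comm]

lemma sum_digit (b : ℕ) :
    ∑ d ∈ Finset.range (b + 1), (if d = b then 2 ^ b - b else 1) = 2 ^ b := by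
  rw [Finset.sum_range_succ]
  have h1 : ∀ d ∈ Finset.range b, (if d = b then 2 ^ b - b else (1 : ℕ)) = 1 := by
    intro d hd
    rw [if_neg (Nat.ne_of_lt (Finset.mem_range.mp hd))]
  rw [Finset.sum_congr rfl h1, if_pos rfl]
  simp only [Finset.sum_const, Finset.card_range, smul_eq_mul, mul_one]
  have := Nat.lt_two_pow_self (n := b)
  omega

lemma sum_range_mul {M : Type*} [AddCommMonoid M] (f : ℕ → M) (n N : ℕ) :
    ∑ i ∈ Finset.range (n * N), f i = ∑ d ∈ Finset.range n, ∑ r ∈ Finset.range N, f (d * N + r) := by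
  induction n with
  | zero => simp
  | succ n ih =>
    rw [Nat.succ_mul, Finset.sum_range_add, ih, Finset.sum_range_succ]

lemma ite_and_one (P Q : Prop) [Decidable P] [Decidable Q] :
    (if P ∧ Q then (1 : ℕ) else 0) = (if P then 1 else 0) * (if Q then 1 else 0) := by
  by_cases hP : P <;> by_cases hQ : Q <;> simp [hP, hQ]

lemma key_sum (b : ℕ) : ∀ (w j1 j2 : ℕ) (B1 B2 : List ℕ),
    j1 + B1.length ≤ j2 → j2 + B2.length ≤ w →
    (∀ d ∈ B1, d ≤ b) → (∀ d ∈ B2, d ≤ b) →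
    (∑ i ∈ Finset.range ((b + 1) ^ w), wt b (lexBlock (b + 1) w i) *
      ((if B1 <+: (lexBlock (b + 1) w i).drop j1 then 1 else 0) *
       (if B2 <+: (lexBlock (b + 1) w i).drop j2 then 1 else 0)))
    = (2 ^ b - b) ^ (B1.count b + B2.count b) * 2 ^ (b * (w - B1.length - B2.length)) := by
  intro w
  induction w with
  | zero =>
    intro j1 j2 B1 B2 h1 h2 _ _
    have hB2 : B2 = [] := List.length_eq_zero_iff.mp (by omega)
    have hB1 : B1 = [] := List.length_eq_zero_iff.mp (by omega)
    subst hB1; subst hB2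
    simp [lexBlock_zero, wt]
  | succ w ih =>
    intro j1 j2 B1 B2 h1 h2 hd1 hd2
    have hsplit : (b + 1) ^ (w + 1) = (b + 1) * (b + 1) ^ w := by
      rw [pow_succ, mul_comm]
    rw [hsplit, sum_range_mul]
    have hlex : ∀ d ∈ Finset.range (b + 1), ∀ r ∈ Finset.range ((b + 1) ^ w),
        lexBlock (b + 1) (w + 1) (d * (b + 1) ^ w + r) = d :: lexBlock (b + 1) w r :=
      fun d hd r hr => lexBlock_succ (b + 1) w d r (by omega) (Finset.mem_range.mp hd)
        (Finset.mem_range.mp hr)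
    rcases j1 with _ | j1'
    · rcases B1 with _ | ⟨e, B1'⟩
      · rcases j2 with _ | j2'
        · rcases B2 with _ | ⟨f, B2'⟩
          · -- Case E : everything trivial
            have hstep : ∀ d ∈ Finset.range (b + 1),
                (∑ r ∈ Finset.range ((b + 1) ^ w),
                  wt b (lexBlock (b + 1) (w + 1) (d * (b + 1) ^ w + r)) *
                    ((if [] <+: (lexBlock (b + 1) (w + 1) (d * (b + 1) ^ w + r)).drop 0
                        then 1 else 0) *
                     (if [] <+: (lexBlock (b + 1) (w + 1) (d * (b + 1) ^ w + r)).drop 0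
                        then 1 else 0)))
                = (if d = b then 2 ^ b - b else 1) * (2 ^ (b * w)) := by
              intro d hd
              have heq : ∀ r ∈ Finset.range ((b + 1) ^ w),
                  wt b (lexBlock (b + 1) (w + 1) (d * (b + 1) ^ w + r)) *
                    ((if [] <+: (lexBlock (b + 1) (w + 1) (d * (b + 1) ^ w + r)).drop 0
                        then 1 else 0) *
                     (if [] <+: (lexBlock (b + 1) (w + 1) (d * (b + 1) ^ w + r)).drop 0
                        then 1 else 0))
                  = (if d = b then 2 ^ b - b else 1) *
                    (wt b (lexBlock (b + 1) w r) *
                      ((if [] <+: (lexBlock (b + 1) w r).drop 0 then 1 else 0) *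
                       (if [] <+: (lexBlock (b + 1) w r).drop 0 then 1 else 0))) := by
                intro r hr
                rw [hlex d hd r hr, wt_cons]
                simp only [List.nil_prefix, if_pos, mul_one]
              rw [Finset.sum_congr rfl heq, ← Finset.mul_sum,
                ih 0 0 [] [] (by simp) (by simp) (by simp) (by simp)]
              simp
            rw [Finset.sum_congr rfl hstep, ← Finset.sum_mul, sum_digit, ← pow_add]
            simp only [List.count_nil, List.length_nil, Nat.add_zero, Nat.sub_zero, pow_zero,
              one_mul, Nat.mul_succ]
            congr 1
            exact Nat.add_comm _ _
          · -- Case D : B2 = f :: B2', j2 = 0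
            have hf : f ≤ b := hd2 f (List.mem_cons_self)
            have hstep : ∀ d ∈ Finset.range (b + 1),
                (∑ r ∈ Finset.range ((b + 1) ^ w),
                  wt b (lexBlock (b + 1) (w + 1) (d * (b + 1) ^ w + r)) *
                    ((if [] <+: (lexBlock (b + 1) (w + 1) (d * (b + 1) ^ w + r)).drop 0
                        then 1 else 0) *
                     (if f :: B2' <+: (lexBlock (b + 1) (w + 1) (d * (b + 1) ^ w + r)).drop 0
                        then 1 else 0)))
                = (if d = f then
                    (if d = b then 2 ^ b - b else 1) *
                      ((2 ^ b - b) ^ (B2'.count b) * 2 ^ (b * (w - B2'.length))) else 0) := by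
              intro d hd
              by_cases hdf : d = f
              · subst hdf
                rw [if_pos rfl]
                have heq : ∀ r ∈ Finset.range ((b + 1) ^ w),
                    wt b (lexBlock (b + 1) (w + 1) (d * (b + 1) ^ w + r)) *
                      ((if [] <+: (lexBlock (b + 1) (w + 1) (d * (b + 1) ^ w + r)).drop 0
                          then 1 else 0) *
                       (if d :: B2' <+: (lexBlock (b + 1) (w + 1) (d * (b + 1) ^ w + r)).drop 0
                          then 1 else 0))
                    = (if d = b then 2 ^ b - b else 1) *
                      (wt b (lexBlock (b + 1) w r) *
                        ((if [] <+: (lexBlock (b + 1) w r).drop 0 then 1 else 0) *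
                         (if B2' <+: (lexBlock (b + 1) w r).drop 0 then 1 else 0))) := by
                  intro r hr
                  rw [hlex d hd r hr, wt_cons]
                  simp only [List.drop_zero, List.nil_prefix, if_pos, List.cons_prefix_cons,
                    true_and, one_mul]
                  ring
                rw [Finset.sum_congr rfl heq, ← Finset.mul_sum,
                  ih 0 0 [] B2' (by simp) (by simpa using h2) (by simp)
                    (fun dd hdd => hd2 dd (List.mem_cons_of_mem _ hdd))]
                simp
              · rw [if_neg hdf]
                refine Finset.sum_eq_zero fun r hr => ?_
                rw [hlex d hd r hr]
                have hnot : ¬ (f :: B2' <+: List.drop 0 (d :: lexBlock (b + 1) w r)) := by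
                  rw [List.drop_zero, List.cons_prefix_cons]
                  rintro ⟨h', _⟩
                  exact hdf h'.symm
                rw [if_neg hnot]
                simp
            rw [Finset.sum_congr rfl hstep, Finset.sum_ite_eq' (Finset.range (b + 1)) f,
              if_pos (Finset.mem_range.mpr (by omega))]
            have hE : b * (w + 1 - List.length ([] : List ℕ) - (f :: B2').length)
                = b * (w - B2'.length) := by
              have h3 : w + 1 - List.length ([] : List ℕ) - (f :: B2').length
                  = w - B2'.length := by
                simp only [List.length_nil, List.length_cons]; omega
              rw [h3]
            rw [hE, List.count_cons, List.count_nil]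
            simp only [beq_iff_eq, Nat.zero_add]
            by_cases hfb : f = b
            · rw [if_pos hfb, if_pos hfb]; ring
            · rw [if_neg hfb, if_neg hfb]; ring
        · -- Case C : B1 = [], j2 = j2' + 1
          have hstep : ∀ d ∈ Finset.range (b + 1),
              (∑ r ∈ Finset.range ((b + 1) ^ w),
                wt b (lexBlock (b + 1) (w + 1) (d * (b + 1) ^ w + r)) *
                  ((if [] <+: (lexBlock (b + 1) (w + 1) (d * (b + 1) ^ w + r)).drop 0
                      then 1 else 0) *
                   (if B2 <+: (lexBlock (b + 1) (w + 1) (d * (b + 1) ^ w + r)).drop (j2' + 1)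
                      then 1 else 0)))
              = (if d = b then 2 ^ b - b else 1) *
                  ((2 ^ b - b) ^ (B2.count b) * 2 ^ (b * (w - B2.length))) := by
            intro d hd
            have heq : ∀ r ∈ Finset.range ((b + 1) ^ w),
                wt b (lexBlock (b + 1) (w + 1) (d * (b + 1) ^ w + r)) *
                  ((if [] <+: (lexBlock (b + 1) (w + 1) (d * (b + 1) ^ w + r)).drop 0
                      then 1 else 0) *
                   (if B2 <+: (lexBlock (b + 1) (w + 1) (d * (b + 1) ^ w + r)).drop (j2' + 1)
                      then 1 else 0))
                = (if d = b then 2 ^ b - b else 1) *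
                  (wt b (lexBlock (b + 1) w r) *
                    ((if [] <+: (lexBlock (b + 1) w r).drop 0 then 1 else 0) *
                     (if B2 <+: (lexBlock (b + 1) w r).drop j2' then 1 else 0))) := by
              intro r hr
              rw [hlex d hd r hr, wt_cons, List.drop_succ_cons]
              simp only [List.nil_prefix, if_pos]
              ring
            rw [Finset.sum_congr rfl heq, ← Finset.mul_sum,
              ih 0 j2' [] B2 (by simp) (by omega) (by simp) hd2]
            simp
          rw [Finset.sum_congr rfl hstep, ← Finset.sum_mul, sum_digit]
          simp only [List.count_nil, List.length_nil, Nat.zero_add, Nat.sub_zero]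
          rw [mul_comm (2 ^ b), mul_assoc, ← pow_add]
          congr 1
          congr 1
          have h3 : w + 1 - B2.length = (w - B2.length) + 1 := by omega
          rw [h3, Nat.mul_succ]
      · -- Case B : B1 = e :: B1', j1 = 0, so j2 = j2' + 1
        rcases j2 with _ | j2'
        · simp at h1
        · have he : e ≤ b := hd1 e (List.mem_cons_self)
          have hstep : ∀ d ∈ Finset.range (b + 1),
              (∑ r ∈ Finset.range ((b + 1) ^ w),
                wt b (lexBlock (b + 1) (w + 1) (d * (b + 1) ^ w + r)) *
                  ((if e :: B1' <+: (lexBlock (b + 1) (w + 1) (d * (b + 1) ^ w + r)).drop 0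
                      then 1 else 0) *
                   (if B2 <+: (lexBlock (b + 1) (w + 1) (d * (b + 1) ^ w + r)).drop (j2' + 1)
                      then 1 else 0)))
              = (if d = e then
                  (if d = b then 2 ^ b - b else 1) *
                    ((2 ^ b - b) ^ (B1'.count b + B2.count b) *
                      2 ^ (b * (w - B1'.length - B2.length))) else 0) := by
            intro d hd
            by_cases hde : d = e
            · subst hde
              rw [if_pos rfl]
              have heq : ∀ r ∈ Finset.range ((b + 1) ^ w),
                  wt b (lexBlock (b + 1) (w + 1) (d * (b + 1) ^ w + r)) *
                    ((if d :: B1' <+: (lexBlock (b + 1) (w + 1) (d * (b + 1) ^ w + r)).drop 0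
                        then 1 else 0) *
                     (if B2 <+: (lexBlock (b + 1) (w + 1) (d * (b + 1) ^ w + r)).drop (j2' + 1)
                        then 1 else 0))
                  = (if d = b then 2 ^ b - b else 1) *
                    (wt b (lexBlock (b + 1) w r) *
                      ((if B1' <+: (lexBlock (b + 1) w r).drop 0 then 1 else 0) *
                       (if B2 <+: (lexBlock (b + 1) w r).drop j2' then 1 else 0))) := by
                intro r hr
                rw [hlex d hd r hr, wt_cons, List.drop_succ_cons]
                simp only [List.drop_zero, List.cons_prefix_cons, true_and]
                ring
              rw [Finset.sum_congr rfl heq, ← Finset.mul_sum,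
                ih 0 j2' B1' B2 (by simp only [List.length_cons] at h1; omega) (by omega)
                  (fun dd hdd => hd1 dd (List.mem_cons_of_mem _ hdd)) hd2]
            · rw [if_neg hde]
              refine Finset.sum_eq_zero fun r hr => ?_
              rw [hlex d hd r hr]
              have hnot : ¬ (e :: B1' <+: List.drop 0 (d :: lexBlock (b + 1) w r)) := by
                rw [List.drop_zero, List.cons_prefix_cons]
                rintro ⟨h', _⟩
                exact hde h'.symm
              rw [if_neg hnot]
              simp
          rw [Finset.sum_congr rfl hstep, Finset.sum_ite_eq' (Finset.range (b + 1)) e,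
            if_pos (Finset.mem_range.mpr (by omega))]
          have hE : b * (w + 1 - (e :: B1').length - B2.length)
              = b * (w - B1'.length - B2.length) := by
            have h3 : w + 1 - (e :: B1').length - B2.length = w - B1'.length - B2.length := by
              simp only [List.length_cons]
              omega
            rw [h3]
          rw [hE, List.count_cons]
          simp only [beq_iff_eq]
          by_cases heb : e = b
          · rw [if_pos heb, if_pos heb]; ring
          · rw [if_neg heb, if_neg heb]; ring
    · -- Case A : j1 = j1' + 1, so j2 = j2'' + 1
      rcases j2 with _ | j2'
      · omega
      · have hstep : ∀ d ∈ Finset.range (b + 1),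
            (∑ r ∈ Finset.range ((b + 1) ^ w),
              wt b (lexBlock (b + 1) (w + 1) (d * (b + 1) ^ w + r)) *
                ((if B1 <+: (lexBlock (b + 1) (w + 1) (d * (b + 1) ^ w + r)).drop (j1' + 1)
                    then 1 else 0) *
                 (if B2 <+: (lexBlock (b + 1) (w + 1) (d * (b + 1) ^ w + r)).drop (j2' + 1)
                    then 1 else 0)))
            = (if d = b then 2 ^ b - b else 1) *
                ((2 ^ b - b) ^ (B1.count b + B2.count b) *
                  2 ^ (b * (w - B1.length - B2.length))) := by
          intro d hd
          have heq : ∀ r ∈ Finset.range ((b + 1) ^ w),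
              wt b (lexBlock (b + 1) (w + 1) (d * (b + 1) ^ w + r)) *
                ((if B1 <+: (lexBlock (b + 1) (w + 1) (d * (b + 1) ^ w + r)).drop (j1' + 1)
                    then 1 else 0) *
                 (if B2 <+: (lexBlock (b + 1) (w + 1) (d * (b + 1) ^ w + r)).drop (j2' + 1)
                    then 1 else 0))
              = (if d = b then 2 ^ b - b else 1) *
                (wt b (lexBlock (b + 1) w r) *
                  ((if B1 <+: (lexBlock (b + 1) w r).drop j1' then 1 else 0) *
                   (if B2 <+: (lexBlock (b + 1) w r).drop j2' then 1 else 0))) := by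
            intro r hr
            rw [hlex d hd r hr, wt_cons, List.drop_succ_cons, List.drop_succ_cons]
            ring
          rw [Finset.sum_congr rfl heq, ← Finset.mul_sum,
            ih j1' j2' B1 B2 (by omega) (by omega) hd1 hd2]
        rw [Finset.sum_congr rfl hstep, ← Finset.sum_mul, sum_digit]
        rw [mul_comm (2 ^ b), mul_assoc, ← pow_add]
        congr 1
        congr 1
        have h3 : w + 1 - B1.length - B2.length = (w - B1.length - B2.length) + 1 := by omega
        rw [h3, Nat.mul_succ]

/-! ### the chunk list -/

def chunkList (b w n : ℕ) : List (List ℕ) :=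
  ((List.range n).map fun i =>
    List.replicate ((2 ^ b - b) ^ ((lexBlock (b + 1) w i).count b)) (lexBlock (b + 1) w i)).flatten

lemma chunkList_succ (b w n : ℕ) :
    chunkList b w (n + 1) = chunkList b w n ++
      List.replicate ((2 ^ b - b) ^ ((lexBlock (b + 1) w n).count b)) (lexBlock (b + 1) w n) := by
  unfold chunkList
  rw [List.range_succ, List.map_append, List.flatten_append]
  simp

lemma chunkList_mem_length (b w n : ℕ) (P : List ℕ) (hP : P ∈ chunkList b w n) : P.length = w := by
  unfold chunkList at hP
  rw [List.mem_flatten] at hP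
  obtain ⟨l, hl, hPl⟩ := hP
  rw [List.mem_map] at hl
  obtain ⟨i, _, rfl⟩ := hl
  rw [List.eq_of_mem_replicate hPl]
  simp

lemma chunkList_map_sum (g : List ℕ → ℕ) (b w n : ℕ) :
    ((chunkList b w n).map g).sum
      = ∑ i ∈ Finset.range n,
          (2 ^ b - b) ^ ((lexBlock (b + 1) w i).count b) * g (lexBlock (b + 1) w i) := by
  induction n with
  | zero => rfl
  | succ n ih =>
    rw [chunkList_succ, List.map_append, List.sum_append, ih, Finset.sum_range_succ,
      List.map_replicate, List.sum_replicate, smul_eq_mul]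

lemma adjSum_chunkList (B : List ℕ) (b w n : ℕ) :
    adjSum B (chunkList b w n) ≤
      (∑ i ∈ Finset.range n, (2 ^ b - b) ^ ((lexBlock (b + 1) w i).count b) *
        cross2 B (lexBlock (b + 1) w i) (lexBlock (b + 1) w i)) + n * (B.length - 1) := by
  induction n with
  | zero => simp [chunkList, adjSum]
  | succ n ih =>
    rw [chunkList_succ]
    calc adjSum B (chunkList b w n ++ List.replicate ((2 ^ b - b) ^
            ((lexBlock (b + 1) w n).count b)) (lexBlock (b + 1) w n))
        ≤ adjSum B (chunkList b w n) + adjSum B (List.replicate ((2 ^ b - b) ^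
            ((lexBlock (b + 1) w n).count b)) (lexBlock (b + 1) w n)) + (B.length - 1) :=
          adjSum_append_le _ _ _
      _ ≤ ((∑ i ∈ Finset.range n, (2 ^ b - b) ^ ((lexBlock (b + 1) w i).count b) *
            cross2 B (lexBlock (b + 1) w i) (lexBlock (b + 1) w i)) + n * (B.length - 1))
          + ((2 ^ b - b) ^ ((lexBlock (b + 1) w n).count b) *
            cross2 B (lexBlock (b + 1) w n) (lexBlock (b + 1) w n)) + (B.length - 1) := by
          have h2 := adjSum_replicate_le B (lexBlock (b + 1) w n)
            ((2 ^ b - b) ^ ((lexBlock (b + 1) w n).count b))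
          exact Nat.add_le_add (Nat.add_le_add ih h2) le_rfl
      _ = (∑ i ∈ Finset.range (n + 1), (2 ^ b - b) ^ ((lexBlock (b + 1) w i).count b) *
            cross2 B (lexBlock (b + 1) w i) (lexBlock (b + 1) w i)) + (n + 1) * (B.length - 1) := by
          rw [Finset.sum_range_succ, Nat.succ_mul]
          ring

lemma sum_wt (b w : ℕ) :
    ∑ i ∈ Finset.range ((b + 1) ^ w), (2 ^ b - b) ^ ((lexBlock (b + 1) w i).count b)
      = 2 ^ (b * w) := by
  have h := key_sum b w 0 w [] [] (by simp) (by simp) (by simp) (by simp)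
  simpa [wt] using h

lemma chunkList_flatten_length (b w : ℕ) :
    (chunkList b w ((b + 1) ^ w)).flatten.length = 2 ^ (b * w) * w := by
  rw [List.length_flatten, chunkList_map_sum List.length]
  have h1 : ∀ i ∈ Finset.range ((b + 1) ^ w),
      (2 ^ b - b) ^ ((lexBlock (b + 1) w i).count b) * (lexBlock (b + 1) w i).length
        = (2 ^ b - b) ^ ((lexBlock (b + 1) w i).count b) * w := by
    intro i _
    rw [lexBlock_length]
  rw [Finset.sum_congr rfl h1, ← Finset.sum_mul, sum_wt]

lemma Pblock_eq (b w : ℕ) : Pblock b w = (chunkList b w ((b + 1) ^ w)).flatten := by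
  unfold Pblock chunkList
  rw [List.flatten_flatten, List.map_map]
  rfl

/-! ### the two main counting estimates -/

lemma sum_inner (b w : ℕ) (B : List ℕ) (hB : 1 ≤ B.length) (hBw : B.length ≤ w)
    (hd : ∀ d ∈ B, d ≤ b) :
    ∑ i ∈ Finset.range ((b + 1) ^ w), (2 ^ b - b) ^ ((lexBlock (b + 1) w i).count b) *
      numOcc B (lexBlock (b + 1) w i)
    = (w - B.length + 1) * ((2 ^ b - b) ^ (B.count b) * 2 ^ (b * (w - B.length))) := by
  have h1 : ∀ i ∈ Finset.range ((b + 1) ^ w),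
      (2 ^ b - b) ^ ((lexBlock (b + 1) w i).count b) * numOcc B (lexBlock (b + 1) w i)
        = ∑ j ∈ Finset.range (w + 1),
            wt b (lexBlock (b + 1) w i) * occ B (lexBlock (b + 1) w i) j := by
    intro i _
    rw [numOcc_eq_sum, lexBlock_length, Finset.mul_sum]
    rfl
  rw [Finset.sum_congr rfl h1, Finset.sum_comm]
  have hsplit : w + 1 = (w - B.length + 1) + B.length := by omega
  rw [hsplit, Finset.sum_range_add]
  have hA : ∀ j ∈ Finset.range (w - B.length + 1),
      (∑ i ∈ Finset.range ((b + 1) ^ w),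
          wt b (lexBlock (b + 1) w i) * occ B (lexBlock (b + 1) w i) j)
        = (2 ^ b - b) ^ (B.count b) * 2 ^ (b * (w - B.length)) := by
    intro j hj
    have hj' : j + B.length ≤ w := by
      rw [Finset.mem_range] at hj
      omega
    have hkey := key_sum b w j w B [] hj' (by simp) hd (by simp)
    simp only [List.nil_prefix, if_true, mul_one, List.count_nil, Nat.add_zero,
      List.length_nil, Nat.sub_zero] at hkey
    rw [← hkey]
    exact Finset.sum_congr rfl fun i _ => rfl
  have hZ : ∀ j ∈ Finset.range B.length,
      (∑ i ∈ Finset.range ((b + 1) ^ w),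
          wt b (lexBlock (b + 1) w i) * occ B (lexBlock (b + 1) w i) ((w - B.length + 1) + j))
        = 0 := by
    intro j hj
    refine Finset.sum_eq_zero fun i _ => ?_
    rw [occ_eq_zero_of_lt hB (by rw [lexBlock_length]; omega), Nat.mul_zero]
  rw [Finset.sum_congr rfl hA, Finset.sum_congr rfl hZ]
  simp [Finset.sum_const, Finset.card_range]

lemma sum_cross (b w : ℕ) (B : List ℕ) (hB : 1 ≤ B.length) (hBw : B.length ≤ w)
    (hd : ∀ d ∈ B, d ≤ b) :
    ∑ i ∈ Finset.range ((b + 1) ^ w), (2 ^ b - b) ^ ((lexBlock (b + 1) w i).count b) *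
      cross2 B (lexBlock (b + 1) w i) (lexBlock (b + 1) w i)
    ≤ (B.length - 1) * ((2 ^ b - b) ^ (B.count b) * 2 ^ (b * (w - B.length))) := by
  have h1 : ∀ i ∈ Finset.range ((b + 1) ^ w),
      (2 ^ b - b) ^ ((lexBlock (b + 1) w i).count b) *
        cross2 B (lexBlock (b + 1) w i) (lexBlock (b + 1) w i)
      = ∑ t ∈ Finset.range (B.length - 1),
          wt b (lexBlock (b + 1) w i) *
            crossInd B (lexBlock (b + 1) w i) (lexBlock (b + 1) w i) (t + 1) := by
    intro i _
    rw [cross2, Finset.mul_sum]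
    rfl
  rw [Finset.sum_congr rfl h1, Finset.sum_comm]
  have hper : ∀ t ∈ Finset.range (B.length - 1),
      (∑ i ∈ Finset.range ((b + 1) ^ w),
          wt b (lexBlock (b + 1) w i) *
            crossInd B (lexBlock (b + 1) w i) (lexBlock (b + 1) w i) (t + 1))
        = (2 ^ b - b) ^ (B.count b) * 2 ^ (b * (w - B.length)) := by
    intro t ht
    have ht' : t + 1 < B.length := by
      rw [Finset.mem_range] at ht
      omega
    have hkey := key_sum b w 0 (w - (t + 1)) (B.drop (t + 1)) (B.take (t + 1))
      (by simp only [Nat.zero_add, List.length_drop]; omega)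
      (by simp only [List.length_take]; omega)
      (fun d hd' => hd d (List.drop_subset _ _ hd'))
      (fun d hd' => hd d (List.take_subset _ _ hd'))
    have hind : ∀ i ∈ Finset.range ((b + 1) ^ w),
        wt b (lexBlock (b + 1) w i) *
          crossInd B (lexBlock (b + 1) w i) (lexBlock (b + 1) w i) (t + 1)
        = wt b (lexBlock (b + 1) w i) *
          ((if B.drop (t + 1) <+: (lexBlock (b + 1) w i).drop 0 then 1 else 0) *
           (if B.take (t + 1) <+: (lexBlock (b + 1) w i).drop (w - (t + 1)) then 1 else 0)) := by
      intro i _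
      congr 1
      have hsuf : (B.take (t + 1) <:+ lexBlock (b + 1) w i) ↔
          B.take (t + 1) <+: (lexBlock (b + 1) w i).drop (w - (t + 1)) := by
        have hlt : (B.take (t + 1)).length = t + 1 := by
          rw [List.length_take]
          omega
        have h := suffix_iff_prefix_drop
          (u := B.take (t + 1)) (v := lexBlock (b + 1) w i)
          (by rw [hlt, lexBlock_length]; omega)
        rwa [hlt, lexBlock_length] at h
      rw [crossInd, List.drop_zero]
      by_cases h3 : B.drop (t + 1) <+: lexBlock (b + 1) w i
      · by_cases h4 : B.take (t + 1) <:+ lexBlock (b + 1) w i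
        · rw [if_pos ⟨Nat.succ_pos t, ht', h4, h3⟩, if_pos h3, if_pos (hsuf.mp h4)]
        · rw [if_neg (by rintro ⟨_, _, hc, _⟩; exact h4 hc),
            if_neg (fun hc => h4 (hsuf.mpr hc))]
          simp
      · rw [if_neg (by rintro ⟨_, _, _, hc⟩; exact h3 hc), if_neg h3]
        simp
    rw [Finset.sum_congr rfl hind, hkey]
    have hc : (B.drop (t + 1)).count b + (B.take (t + 1)).count b = B.count b := by
      rw [Nat.add_comm, ← List.count_append, List.take_append_drop]
    have hl : w - (B.drop (t + 1)).length - (B.take (t + 1)).length = w - B.length := by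
      rw [List.length_drop, List.length_take]
      omega
    rw [hc, hl]
  rw [Finset.sum_congr rfl hper]
  simp [Finset.sum_const, Finset.card_range]

/-! ### nu lemmas -/

lemma nu_cons (b d : ℕ) (B : List ℕ) : nu b (d :: B) = nu1 b d * nu b B := by
  simp [nu]

lemma cast_x (b : ℕ) : (((2 ^ b - b : ℕ)) : ℝ) = 2 ^ b - (b : ℝ) := by
  rw [Nat.cast_sub (le_of_lt (Nat.lt_two_pow_self (n := b)))]
  push_cast
  ring

lemma nu_eq (b : ℕ) (B : List ℕ) (h : ∀ d ∈ B, d ≤ b) :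
    nu b B = (((2 ^ b - b : ℕ) ^ (B.count b) : ℕ) : ℝ) / 2 ^ (b * B.length) := by
  induction B with
  | nil => simp [nu]
  | cons d B ih =>
    have hd : d ≤ b := h d (List.mem_cons_self)
    have ih' := ih (fun e he => h e (List.mem_cons_of_mem _ he))
    rw [nu_cons, ih', List.count_cons, List.length_cons]
    have h2 : ((2 : ℝ)) ^ (b * B.length) ≠ 0 := by positivity
    have h2b : ((2 : ℝ)) ^ b ≠ 0 := by positivity
    have hmul : b * (B.length + 1) = b * B.length + b := by ring
    rcases Nat.lt_or_ge d b with hdb | hdb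
    · have hne : ¬ (d = b) := by omega
      rw [nu1, if_pos hdb]
      simp only [hne, if_false, beq_iff_eq, Nat.add_zero, hmul]
      rw [pow_add, div_mul_div_comm, one_mul, mul_comm ((2:ℝ) ^ b)]
    · have heq : d = b := by omega
      rw [nu1, if_neg (by omega), if_pos heq]
      simp only [heq, beq_self_eq_true, if_true, hmul]
      rw [pow_add, pow_succ]
      push_cast [cast_x]
      field_simp
      ring

lemma nu_zero (b : ℕ) (B : List ℕ) (h : ∃ d ∈ B, b < d) : nu b B = 0 := by
  obtain ⟨d, hd, hbd⟩ := h
  unfold nu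
  apply List.prod_eq_zero
  rw [List.mem_map]
  refine ⟨d, hd, ?_⟩
  rw [nu1, if_neg (by omega), if_neg (by omega)]

lemma Pblock_elem_le (b w : ℕ) : ∀ d ∈ Pblock b w, d ≤ b := by
  intro d hd
  rw [Pblock, List.mem_flatten] at hd
  obtain ⟨l, hl, hdl⟩ := hd
  rw [List.mem_map] at hl
  obtain ⟨i, _, rfl⟩ := hl
  rw [List.mem_flatten] at hdl
  obtain ⟨l2, hl2, hdl2⟩ := hdl
  rw [List.eq_of_mem_replicate hl2] at hdl2
  have := lexBlock_elem_le (b + 1) w i (by omega) d hdl2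
  omega

lemma numOcc_eq_zero {B y : List ℕ} {d : ℕ} (hd : d ∈ B) (hdy : d ∉ y) : numOcc B y = 0 := by
  rw [numOcc, List.length_eq_zero_iff, List.filter_eq_nil_iff]
  intro i _
  have hnp : ¬ (B <+: y.drop i) := fun hp => hdy (List.drop_subset i y (hp.subset hd))
  simpa [List.isPrefixOf_iff_prefix] using hnp

lemma sq_le_pow (b : ℕ) (hb : 6 ≤ b) : (b + 1) ^ 2 ≤ 2 ^ b := by
  induction b, hb using Nat.le_induction with
  | base => norm_num
  | succ n hn ih =>
    have h1 : (n + 1 + 1) ^ 2 ≤ 2 * (n + 1) ^ 2 := by nlinarith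
    have h2 : 2 * (n + 1) ^ 2 ≤ 2 * 2 ^ n := by omega
    calc (n + 1 + 1) ^ 2 ≤ 2 * 2 ^ n := le_trans h1 h2
      _ = 2 ^ (n + 1) := by rw [pow_succ]; ring

end Stmt5Aux

open Stmt5Aux Finset

/-- If `b, k, w` are positive integers with `b ≥ 6` and `2k ≤ w`, and `ε = k/w`, then
the block `P_{b,w}` is `(ε, k, ν_b)`-normal. -/
theorem stmt5 (b k w : ℕ) (hb : 6 ≤ b) (hk : 0 < k) (hw : 0 < w) (hkw : 2 * k ≤ w) :
    EKNormal ((k : ℝ) / (w : ℝ)) k (nu b) (Pblock b w) := by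
  intro B hB1 hBk
  have hmw : B.length ≤ w := by omega
  have hx1 : 1 ≤ 2 ^ b - b := by
    have := Nat.lt_two_pow_self (n := b)
    omega
  have hlen : (Pblock b w).length = 2 ^ (b * w) * w := by
    rw [Pblock_eq, chunkList_flatten_length]
  have hwR : (0 : ℝ) < (w : ℝ) := by positivity
  by_cases hbig : ∀ d ∈ B, d ≤ b
  · -- main case
    set m := B.length with hm
    set N := (b + 1) ^ w with hN
    set X := (2 ^ b - b) ^ (B.count b) * 2 ^ (b * (w - m)) with hX
    have hX1 : 1 ≤ X := by
      have : 1 ≤ (2 ^ b - b) ^ (B.count b) := Nat.one_le_pow _ _ (by omega)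
      have : 1 ≤ 2 ^ (b * (w - m)) := Nat.one_le_pow _ _ (by omega)
      calc 1 = 1 * 1 := rfl
        _ ≤ X := Nat.mul_le_mul (Nat.one_le_pow _ _ (by omega)) (Nat.one_le_pow _ _ (by omega))
    -- lower bound (ℕ)
    have hlow : (w - m + 1) * X ≤ numOcc B (Pblock b w) := by
      rw [Pblock_eq]
      refine le_trans ?_ (numOcc_flatten_ge hB1 (chunkList b w N))
      rw [chunkList_map_sum (numOcc B), sum_inner b w B hB1 hmw hbig]
    -- upper bound (ℕ)
    have hup : numOcc B (Pblock b w) ≤ (w - m + 1) * X + ((m - 1) * X + N * (m - 1)) := by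
      rw [Pblock_eq]
      have h1 := numOcc_flatten_le hB1 hmw (chunkList b w N) (chunkList_mem_length b w N)
      rw [chunkList_map_sum (numOcc B), sum_inner b w B hB1 hmw hbig] at h1
      have h2 := adjSum_chunkList B b w N
      have h3 := sum_cross b w B hB1 hmw hbig
      calc numOcc B (chunkList b w N).flatten
          ≤ (w - m + 1) * X + adjSum B (chunkList b w N) := h1
        _ ≤ (w - m + 1) * X + (((m - 1) * X) + N * (m - 1)) := by
            refine Nat.add_le_add_left (le_trans h2 ?_) _
            exact Nat.add_le_add_right h3 _
    -- N * (m - 1) ≤ X * k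
    have hNX : N ≤ X := by
      have hsq : N ^ 2 ≤ (2 ^ (b * (w - k))) ^ 2 := by
        have e1 : N ^ 2 = ((b + 1) ^ 2) ^ w := by
          rw [hN, ← pow_mul, ← pow_mul, Nat.mul_comm]
        have e2 : ((b + 1) ^ 2) ^ w ≤ (2 ^ b) ^ w :=
          Nat.pow_le_pow_left (sq_le_pow b hb) w
        have e3 : (2 ^ b) ^ w = 2 ^ (b * w) := by rw [← pow_mul]
        have e4 : (2 ^ (b * (w - k))) ^ 2 = 2 ^ (b * (w - k) * 2) := by rw [← pow_mul]
        have e5 : b * w ≤ b * (w - k) * 2 := by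
          have : w ≤ (w - k) * 2 := by omega
          calc b * w ≤ b * ((w - k) * 2) := Nat.mul_le_mul_left b this
            _ = b * (w - k) * 2 := by ring
        rw [e1, e4]
        exact le_trans e2 (by rw [e3]; exact Nat.pow_le_pow_right (by omega) e5)
      have hNle : N ≤ 2 ^ (b * (w - k)) := (Nat.pow_le_pow_iff_left (by omega)).mp hsq
      have h6 : 2 ^ (b * (w - k)) ≤ 2 ^ (b * (w - m)) :=
        Nat.pow_le_pow_right (by omega) (Nat.mul_le_mul_left b (by omega))
      have h7 : 2 ^ (b * (w - m)) ≤ X := by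
        rw [hX]
        exact Nat.le_mul_of_pos_left _ (Nat.one_le_pow _ _ (by omega))
      omega
    have hfinup : numOcc B (Pblock b w) ≤ (w + k) * X := by
      have h8 : N * (m - 1) ≤ X * k := Nat.mul_le_mul hNX (by omega)
      have h9 : (w - m + 1) * X + (((m - 1) * X) + X * k) = (w + k) * X := by
        have hw' : w - m + 1 + (m - 1) = w := by omega
        calc (w - m + 1) * X + (((m - 1) * X) + X * k)
            = ((w - m + 1) + (m - 1)) * X + k * X := by ring
          _ = (w + k) * X := by rw [hw']; ring
      omega
    have hfinlow : (w - k) * X ≤ numOcc B (Pblock b w) := by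
      have : (w - k) * X ≤ (w - m + 1) * X := Nat.mul_le_mul_right X (by omega)
      omega
    -- move to ℝ
    have hnuX : nu b B * ((Pblock b w).length : ℝ) = (X : ℝ) * w := by
      rw [nu_eq b B hbig, hlen, hX]
      have hpow : (2 : ℝ) ^ (b * (w - m)) * 2 ^ (b * m) = 2 ^ (b * w) := by
        rw [← pow_add]
        congr 1
        rw [← Nat.mul_add]
        congr 1
        omega
      push_cast
      rw [div_mul_eq_mul_div, div_eq_iff (by positivity : ((2 : ℝ) ^ (b * m)) ≠ 0)]
      rw [← hpow]
      ring
    constructor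
    · -- lower
      have hcast : ((w - k : ℕ) : ℝ) = (w : ℝ) - k := by
        rw [Nat.cast_sub (by omega)]
      calc nu b B * ((Pblock b w).length : ℝ) * (1 - (k : ℝ) / w)
          = (X : ℝ) * (w * (1 - (k : ℝ) / w)) := by rw [hnuX]; ring
        _ = (X : ℝ) * ((w : ℝ) - k) := by
            congr 1
            field_simp
        _ = (((w - k) * X : ℕ) : ℝ) := by push_cast [hcast]; ring
        _ ≤ (numOcc B (Pblock b w) : ℝ) := by exact_mod_cast hfinlow
    · -- upper
      calc (numOcc B (Pblock b w) : ℝ) ≤ (((w + k) * X : ℕ) : ℝ) := by exact_mod_cast hfinup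
        _ = (X : ℝ) * ((w : ℝ) + k) := by push_cast; ring
        _ = (X : ℝ) * (w * (1 + (k : ℝ) / w)) := by
            congr 1
            field_simp
        _ = nu b B * ((Pblock b w).length : ℝ) * (1 + (k : ℝ) / w) := by rw [hnuX]; ring
  · -- degenerate case: B contains a digit > b
    push_neg at hbig
    obtain ⟨d, hdB, hdb⟩ := hbig
    have h0 : numOcc B (Pblock b w) = 0 := by
      refine numOcc_eq_zero hdB fun hdy => ?_
      have := Pblock_elem_le b w d hdy
      omega
    have hnu : nu b B = 0 := nu_zero b B ⟨d, hdB, by omega⟩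
    rw [h0, hnu]
    norm_num
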